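/- arXiv:1804.00565 — 10 statements merged into one kernel-verified Lean document; each statement's English description precedes it below -/
import Mathlib

section
/- Every PMV_f-algebra is a PMV-algebra. Precisely: let A be an MVW-rig (associative, commutative product) satisfying in addition a·b ≤ a ∧ b and a·(b ⊖ c) = a·b ⊖ a·c for all a, b, c ∈ A. Then for all a, b, c ∈ A: (1) a ⊙ b = 0 implies a·c ⊙ b·c = 0, and (2) a ⊙ b = 0 implies c·(a ⊕ b) = c·a ⊕ c·b. -/
/-- The data of an MV-algebra: a binary sum, a negation and a zero. -/
structure MVData (A : Type*) where
  add : A → A → A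
  neg : A → A
  zero : A

namespace MVData

variable {A : Type*} (m : MVData A)

/-- The top element `u = ¬0`. -/
def unit : A := m.neg m.zero

/-- Truncated difference `x ⊖ y = ¬(¬x ⊕ y)`. -/
def ominus (x y : A) : A := m.neg (m.add (m.neg x) y)

/-- The product `x ⊙ y = ¬(¬x ⊕ ¬y)`. -/
def odot (x y : A) : A := m.neg (m.add (m.neg x) (m.neg y))

/-- The MV order: `x ≤ y` iff `x ⊖ y = 0`. -/
def le (x y : A) : Prop := m.ominus x y = m.zero

/-- The lattice join `x ∨ y = (x ⊖ y) ⊕ y`. -/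
def sup (x y : A) : A := m.add (m.ominus x y) y

/-- The lattice meet `x ∧ y = ¬(¬x ∨ ¬y)`. -/
def inf (x y : A) : A := m.neg (m.sup (m.neg x) (m.neg y))

/-- The MV-algebra axioms: `(A, ⊕, 0)` is a commutative monoid and `¬` satisfies
`¬¬x = x`, `x ⊕ ¬0 = ¬0` and `¬(¬x ⊕ y) ⊕ y = ¬(¬y ⊕ x) ⊕ x`. -/
structure IsMV : Prop where
  add_assoc : ∀ x y z : A, m.add (m.add x y) z = m.add x (m.add y z)
  add_comm : ∀ x y : A, m.add x y = m.add y x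
  add_zero : ∀ x : A, m.add x m.zero = x
  neg_neg : ∀ x : A, m.neg (m.neg x) = x
  add_unit : ∀ x : A, m.add x (m.neg m.zero) = m.neg m.zero
  lukasiewicz : ∀ x y : A,
    m.add (m.neg (m.add (m.neg x) y)) y = m.add (m.neg (m.add (m.neg y) x)) x

end MVData




namespace MVData

variable {A : Type*} {m : MVData A}

lemma zero_add' (hmv : m.IsMV) (x : A) : m.add m.zero x = x := by
  rw [hmv.add_comm, hmv.add_zero]

lemma neg_add_self' (hmv : m.IsMV) (x : A) :
    m.add (m.neg x) x = m.neg m.zero := by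
  have h := hmv.lukasiewicz x (m.neg m.zero)
  rw [hmv.add_unit (m.neg x), hmv.neg_neg m.zero, zero_add' hmv,
    zero_add' hmv x] at h
  exact h.symm

lemma le_add_left (hmv : m.IsMV) (x w : A) : m.le x (m.add w x) := by
  show m.neg (m.add (m.neg x) (m.add w x)) = m.zero
  rw [hmv.add_comm w x, ← hmv.add_assoc, neg_add_self' hmv, hmv.add_comm,
    hmv.add_unit, hmv.neg_neg]

lemma sup_comm' (hmv : m.IsMV) (x y : A) : m.sup x y = m.sup y x := by
  show m.add (m.neg (m.add (m.neg x) y)) y = m.add (m.neg (m.add (m.neg y) x)) x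
  exact hmv.lukasiewicz x y

lemma sup_of_le (hmv : m.IsMV) {x y : A} (h : m.le y x) : m.sup x y = x := by
  rw [sup_comm' hmv]
  show m.add (m.ominus y x) x = x
  have h' : m.ominus y x = m.zero := h
  rw [h', zero_add' hmv]

lemma le_trans' (hmv : m.IsMV) {x y z : A} (hxy : m.le x y) (hyz : m.le y z) :
    m.le x z := by
  have h1 : m.add (m.ominus y x) x = y := sup_of_le hmv hxy
  have h2 : m.add (m.ominus z y) y = z := sup_of_le hmv hyz
  have h3 := le_add_left hmv x (m.add (m.ominus z y) (m.ominus y x))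
  rw [hmv.add_assoc, h1, h2] at h3
  exact h3

lemma le_neg' (hmv : m.IsMV) {x y : A} (h : m.le x y) :
    m.le (m.neg y) (m.neg x) := by
  show m.neg (m.add (m.neg (m.neg y)) (m.neg x)) = m.zero
  rw [hmv.neg_neg y, hmv.add_comm]
  exact h

lemma le_sup_left' (hmv : m.IsMV) (x y : A) : m.le x (m.sup x y) := by
  rw [sup_comm' hmv]
  exact le_add_left hmv x _

lemma inf_le_left' (hmv : m.IsMV) (x y : A) : m.le (m.inf x y) x := by
  have h := le_neg' hmv (le_sup_left' hmv (m.neg x) (m.neg y))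
  rw [hmv.neg_neg x] at h
  exact h

end MVData

/-- Every `PMV_f`-algebra is a `PMV`-algebra: if `A` is an MVW-rig
(associative commutative product, `a·0 = 0`, `a·(b ⊕ c) ≤ a·b ⊕ a·c`,
`a·b ⊖ a·c ≤ a·(b ⊖ c)`) which moreover satisfies `a·b ≤ a ∧ b` and
`a·(b ⊖ c) = a·b ⊖ a·c`, then `a ⊙ b = 0` implies both `a·c ⊙ b·c = 0` and
`c·(a ⊕ b) = c·a ⊕ c·b`. -/
theorem pmvf_is_pmv {A : Type*} (m : MVData A) (hmv : m.IsMV)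
    (mul : A → A → A)
    (mul_assoc : ∀ a b c : A, mul (mul a b) c = mul a (mul b c))
    (mul_comm : ∀ a b : A, mul a b = mul b a)
    (mul_zero : ∀ a : A, mul a m.zero = m.zero)
    (mul_add_le : ∀ a b c : A, m.le (mul a (m.add b c)) (m.add (mul a b) (mul a c)))
    (ominus_mul_le : ∀ a b c : A,
      m.le (m.ominus (mul a b) (mul a c)) (mul a (m.ominus b c)))
    (mul_le_inf : ∀ a b : A, m.le (mul a b) (m.inf a b))
    (mul_ominus : ∀ a b c : A, mul a (m.ominus b c) = m.ominus (mul a b) (mul a c)) :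
    ∀ a b c : A,
      (m.odot a b = m.zero → m.odot (mul a c) (mul b c) = m.zero) ∧
      (m.odot a b = m.zero → mul c (m.add a b) = m.add (mul c a) (mul c b)) := by

  intro a b c
  constructor
  · intro hab
    have h1 : m.le (mul a c) a :=
      MVData.le_trans' hmv (mul_le_inf a c) (MVData.inf_le_left' hmv a c)
    have h2 : m.le (mul b c) b :=
      MVData.le_trans' hmv (mul_le_inf b c) (MVData.inf_le_left' hmv b c)
    have h3 : m.le a (m.neg b) := hab
    have h4 : m.le (m.neg b) (m.neg (mul b c)) := MVData.le_neg' hmv h2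
    exact MVData.le_trans' hmv (MVData.le_trans' hmv h1 h3) h4
  · intro hab
    have hab' : m.neg (m.add (m.neg a) (m.neg b)) = m.zero := hab
    have hK : m.ominus (m.add a b) b = a := by
      show m.neg (m.add (m.neg (m.add a b)) b) = a
      have key : m.add (m.neg (m.add a b)) b = m.neg a := by
        have h := hmv.lukasiewicz (m.neg a) b
        rw [hmv.neg_neg a] at h
        rw [h, hmv.add_comm (m.neg b) (m.neg a), hab', MVData.zero_add' hmv]
      rw [key, hmv.neg_neg]
    have hca : mul c a = m.ominus (mul c (m.add a b)) (mul c b) := by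
      rw [← mul_ominus, hK]
    have hb_ab : m.le b (m.add a b) := by
      show m.neg (m.add (m.neg b) (m.add a b)) = m.zero
      rw [← hmv.add_assoc, hmv.add_comm (m.neg b) a, hmv.add_assoc,
        MVData.neg_add_self' hmv, hmv.add_unit, hmv.neg_neg]
    have hmono : m.le (mul c b) (mul c (m.add a b)) := by
      have h := mul_ominus c b (m.add a b)
      have hb' : m.ominus b (m.add a b) = m.zero := hb_ab
      rw [hb', mul_zero] at h
      exact h.symm
    have hsup : m.sup (mul c (m.add a b)) (mul c b) = mul c (m.add a b) :=
      MVData.sup_of_le hmv hmono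
    calc mul c (m.add a b) = m.sup (mul c (m.add a b)) (mul c b) := hsup.symm
      _ = m.add (m.ominus (mul c (m.add a b)) (mul c b)) (mul c b) := rfl
      _ = m.add (mul c a) (mul c b) := by rw [← hca]
end

section
/- Every unitary PMV-algebra is a PMV_f-algebra. Precisely: let A be an MV-algebra with an associative, commutative product · such that a·u = a and a·(b ⊖ c) = a·b ⊖ a·c for all a, b, c ∈ A. Then for all a, b, c ∈ A: a·0 = 0, a·(b ⊕ c) ≤ a·b ⊕ a·c, a·b ⊖ a·c ≤ a·(b ⊖ c), and a·b ≤ a ∧ b. -/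
section MVLemmas

open MVData

variable {A : Type*} {m : MVData A} (h : m.IsMV)
include h

lemma mv_zero_add (x : A) : m.add m.zero x = x := by
  rw [h.add_comm, h.add_zero]

lemma mv_neg_unit : m.neg m.unit = m.zero := h.neg_neg _

lemma mv_add_unit' (x : A) : m.add x m.unit = m.unit := h.add_unit x

lemma mv_unit_add (x : A) : m.add m.unit x = m.unit := by
  rw [h.add_comm]; exact h.add_unit x

lemma mv_neg_add_self (x : A) : m.add (m.neg x) x = m.unit := by
  have hl := h.lukasiewicz m.unit x
  rw [mv_neg_unit h, mv_zero_add h, mv_add_unit' h] at hl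
  exact hl

lemma mv_ominus_self (x : A) : m.ominus x x = m.zero := by
  unfold MVData.ominus
  rw [mv_neg_add_self h, mv_neg_unit h]

lemma mv_zero_ominus (x : A) : m.ominus m.zero x = m.zero := by
  unfold MVData.ominus
  rw [show m.neg m.zero = m.unit from rfl, mv_unit_add h, mv_neg_unit h]

lemma mv_le_zero {x : A} (hx : m.le x m.zero) : x = m.zero := by
  unfold MVData.le MVData.ominus at hx
  rw [h.add_zero] at hx
  rw [← h.neg_neg x, hx]

lemma mv_ominus_ominus (x y z : A) :
    m.ominus (m.ominus x y) z = m.ominus x (m.add y z) := by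
  unfold MVData.ominus
  rw [h.neg_neg, h.add_assoc]

lemma mv_luk (x y : A) :
    m.add (m.ominus x y) y = m.add (m.ominus y x) x := h.lukasiewicz x y

lemma mv_ominus_mono {x y : A} (z : A) (hxy : m.le x y) :
    m.le (m.ominus x z) (m.ominus y z) := by
  unfold MVData.le at *
  rw [mv_ominus_ominus h, h.add_comm z (m.ominus y z), mv_luk h y z,
    h.add_comm (m.ominus z y) y, ← mv_ominus_ominus h, hxy, mv_zero_ominus h]

lemma mv_le_trans {x y z : A} (hxy : m.le x y) (hyz : m.le y z) : m.le x z := by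
  have := mv_ominus_mono h z hxy
  unfold MVData.le at *
  rw [hyz] at this
  exact mv_le_zero h this

lemma mv_add_ominus_le (p r : A) : m.le (m.ominus (m.add p r) r) p := by
  unfold MVData.le
  rw [mv_ominus_ominus h, h.add_comm r p, mv_ominus_self h]

lemma mv_add_mono {p q : A} (r : A) (hpq : m.le p q) :
    m.le (m.add p r) (m.add q r) := by
  unfold MVData.le
  rw [h.add_comm q r, ← mv_ominus_ominus h]
  exact mv_le_trans h (mv_add_ominus_le h p r) hpq

lemma mv_sup_le {a b c : A} (hac : m.le a c) (hbc : m.le b c) :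
    m.le (m.sup a b) c := by
  unfold MVData.sup
  have h1 : m.le (m.add (m.ominus a b) b) (m.add (m.ominus c b) b) :=
    mv_add_mono h b (mv_ominus_mono h b hac)
  have h2 : m.add (m.ominus c b) b = m.add (m.ominus b c) c := mv_luk h c b
  rw [h2] at h1
  unfold MVData.le at hbc
  rw [hbc, mv_zero_add h] at h1
  exact h1

lemma mv_neg_ominus_neg (x y : A) :
    m.ominus (m.neg y) (m.neg x) = m.ominus x y := by
  unfold MVData.ominus
  rw [h.neg_neg, h.add_comm]

lemma mv_le_neg {x y : A} (hxy : m.le x y) : m.le (m.neg y) (m.neg x) := by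
  unfold MVData.le at *
  rw [mv_neg_ominus_neg h]
  exact hxy

lemma mv_le_inf {x a b : A} (ha : m.le x a) (hb : m.le x b) :
    m.le x (m.inf a b) := by
  unfold MVData.inf
  have hs : m.le (m.sup (m.neg a) (m.neg b)) (m.neg x) :=
    mv_sup_le h (mv_le_neg h ha) (mv_le_neg h hb)
  have := mv_le_neg h hs
  rw [h.neg_neg] at this
  exact this

end MVLemmas

lemma mv_ominus_unit {A : Type*} {m : MVData A} (h : m.IsMV) (x : A) :
    m.ominus x m.unit = m.zero := by
  unfold MVData.ominus MVData.unit
  rw [h.add_unit, h.neg_neg]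


/-- Every unitary PMV-algebra (`PMV_1`) is a `PMV_f`-algebra: if `A`
is an MV-algebra with an associative commutative product satisfying `a·u = a` (with
`u = ¬0`) and `a·(b ⊖ c) = a·b ⊖ a·c`, then `a·0 = 0`, `a·(b ⊕ c) ≤ a·b ⊕ a·c`,
`a·b ⊖ a·c ≤ a·(b ⊖ c)` and `a·b ≤ a ∧ b`. -/
theorem pmv1_is_pmvf {A : Type*} (m : MVData A) (hmv : m.IsMV)
    (mul : A → A → A)
    (mul_assoc : ∀ a b c : A, mul (mul a b) c = mul a (mul b c))
    (mul_comm : ∀ a b : A, mul a b = mul b a)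
    (mul_unit : ∀ a : A, mul a m.unit = a)
    (mul_ominus : ∀ a b c : A, mul a (m.ominus b c) = m.ominus (mul a b) (mul a c)) :
    ∀ a b c : A,
      mul a m.zero = m.zero ∧
      m.le (mul a (m.add b c)) (m.add (mul a b) (mul a c)) ∧
      m.le (m.ominus (mul a b) (mul a c)) (mul a (m.ominus b c)) ∧
      m.le (mul a b) (m.inf a b) := by
  intro a b c
  have hz : ∀ x : A, mul x m.zero = m.zero := by
    intro x
    have h0 : m.ominus m.zero m.zero = m.zero := mv_ominus_self hmv m.zero
    calc mul x m.zero = mul x (m.ominus m.zero m.zero) := by rw [h0]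
      _ = m.ominus (mul x m.zero) (mul x m.zero) := mul_ominus _ _ _
      _ = m.zero := mv_ominus_self hmv _
  have hmono : ∀ x y z : A, m.le y z → m.le (mul x y) (mul x z) := by
    intro x y z hyz
    unfold MVData.le at *
    rw [← mul_ominus, hyz, hz]
  have hkey : ∀ x y : A, m.le (mul x y) x := by
    intro x y
    have h1 := mul_ominus x y m.unit
    rw [mul_unit, mv_ominus_unit hmv, hz] at h1
    exact h1.symm
  refine ⟨hz a, ?_, ?_, ?_⟩
  · show m.ominus (mul a (m.add b c)) (m.add (mul a b) (mul a c)) = m.zero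
    rw [← mv_ominus_ominus hmv, ← mul_ominus]
    have hle : m.le (m.ominus (m.add b c) b) c := by
      have := mv_add_ominus_le hmv c b
      rw [hmv.add_comm c b] at this
      exact this
    exact hmono a _ _ hle
  · show m.ominus (m.ominus (mul a b) (mul a c)) (mul a (m.ominus b c)) = m.zero
    rw [mul_ominus]
    exact mv_ominus_self hmv _
  · have h1 : m.le (mul a b) a := hkey a b
    have h2 : m.le (mul a b) b := by
      have := hkey b a
      rw [mul_comm b a] at this
      exact this
    exact mv_le_inf hmv h1 h2
end

section
/- In every PMV_f-algebra A, the product distributes over the lattice operations: for all a, b, c ∈ A, a·(b ∧ c) = a·b ∧ a·c and a·(b ∨ c) = a·b ∨ a·c. -/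
namespace MVHelper

open MVData

variable {A : Type*} {m : MVData A} (h : m.IsMV)
include h

lemma neg_inj {x y : A} (e : m.neg x = m.neg y) : x = y := by
  have := congrArg m.neg e
  rwa [h.neg_neg, h.neg_neg] at this

lemma zero_add (x : A) : m.add m.zero x = x := by rw [h.add_comm, h.add_zero]

lemma neg_add_self (x : A) : m.add (m.neg x) x = m.neg m.zero := by
  have hx := h.lukasiewicz x (m.neg m.zero)
  rw [h.add_unit, h.neg_neg, zero_add h] at hx
  exact hx.symm

lemma sub_self (x : A) : m.ominus x x = m.zero := by
  rw [MVData.ominus, neg_add_self h, h.neg_neg]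

lemma ominus_ominus (x y z : A) :
    m.ominus (m.ominus x y) z = m.ominus x (m.add y z) := by
  simp only [MVData.ominus, h.neg_neg, h.add_assoc]

lemma sup_comm (x y : A) : m.sup x y = m.sup y x := by
  simpa only [MVData.sup, MVData.ominus] using h.lukasiewicz x y

lemma sup_of_le {x y : A} (hle : m.le y x) : m.sup x y = x := by
  rw [sup_comm h, MVData.sup, hle, zero_add h]

lemma neg_unit : m.neg (m.neg m.zero) = m.zero := h.neg_neg _

lemma le_of_neg_add {x y : A} (e : m.add (m.neg x) y = m.neg m.zero) : m.le x y := by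
  rw [MVData.le, MVData.ominus, e, neg_unit h]

lemma neg_add_of_le {x y : A} (hle : m.le x y) : m.add (m.neg x) y = m.neg m.zero := by
  have := congrArg m.neg hle
  rwa [MVData.ominus, h.neg_neg] at this

lemma le_trans {x y z : A} (h1 : m.le x y) (h2 : m.le y z) : m.le x z := by
  apply le_of_neg_add h
  have hz : z = m.add (m.ominus z y) y := (sup_of_le h h2).symm
  calc m.add (m.neg x) z = m.add (m.neg x) (m.add (m.ominus z y) y) := by rw [← hz]
    _ = m.add (m.add (m.neg x) y) (m.ominus z y) := by
        rw [h.add_comm (m.ominus z y) y, ← h.add_assoc, h.add_assoc,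
          h.add_comm y (m.ominus z y), ← h.add_assoc]
    _ = m.add (m.neg m.zero) (m.ominus z y) := by rw [neg_add_of_le h h1]
    _ = m.neg m.zero := by rw [h.add_comm, h.add_unit]

lemma le_antisymm {x y : A} (h1 : m.le x y) (h2 : m.le y x) : x = y := by
  have := sup_comm h x y
  rw [MVData.sup, MVData.sup, h1, h2, zero_add h, zero_add h] at this
  exact this.symm

lemma ominus_add_le (x z : A) : m.le (m.ominus (m.add x z) z) x := by
  rw [MVData.le, ominus_ominus h, h.add_comm z x, sub_self h]

lemma add_le_add_right {x y : A} (hle : m.le x y) (z : A) :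
    m.le (m.add x z) (m.add y z) := by
  rw [MVData.le, h.add_comm y z, ← ominus_ominus h]
  exact le_trans h (ominus_add_le h x z) hle

lemma neg_antitone {x y : A} (hle : m.le x y) : m.le (m.neg y) (m.neg x) := by
  rw [MVData.le, MVData.ominus, h.neg_neg, h.add_comm]
  exact hle

lemma ominus_mono_left {x y : A} (hle : m.le x y) (z : A) :
    m.le (m.ominus x z) (m.ominus y z) := by
  apply neg_antitone h
  have := add_le_add_right h (neg_antitone h hle) z
  rw [h.add_comm (m.neg y), h.add_comm (m.neg x)] at this
  rw [h.add_comm z (m.neg y), h.add_comm z (m.neg x)] at this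
  exact this

lemma le_sup_left (x y : A) : m.le x (m.sup x y) := by
  rw [MVData.le, MVData.sup, h.add_comm (m.ominus x y) y, ← ominus_ominus h,
    sub_self h]

lemma le_sup_right (x y : A) : m.le y (m.sup x y) := by
  rw [sup_comm h]; exact le_sup_left h y x

lemma sup_ominus (x y : A) : m.ominus (m.sup x y) y = m.ominus x y := by
  apply le_antisymm h
  · rw [MVData.le, ominus_ominus h, h.add_comm y]
    exact sub_self h _
  · exact ominus_mono_left h (le_sup_left h x y) y

lemma inf_eq (x y : A) : m.inf x y = m.ominus x (m.ominus x y) := by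
  have hl := h.lukasiewicz (m.neg x) (m.neg y)
  rw [h.neg_neg, h.neg_neg] at hl
  simp only [MVData.inf, MVData.sup, MVData.ominus, h.neg_neg]
  rw [hl, h.add_comm y (m.neg x), h.add_comm (m.neg (m.add (m.neg x) y)) (m.neg x)]

end MVHelper


/-- In every `PMV_f`-algebra the product distributes over the lattice
operations: `a·(b ∧ c) = a·b ∧ a·c` and `a·(b ∨ c) = a·b ∨ a·c`. -/
theorem pmvf_mul_distrib_lattice {A : Type*} (m : MVData A) (hmv : m.IsMV)
    (mul : A → A → A)
    (mul_assoc : ∀ a b c : A, mul (mul a b) c = mul a (mul b c))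
    (mul_comm : ∀ a b : A, mul a b = mul b a)
    (mul_zero : ∀ a : A, mul a m.zero = m.zero)
    (mul_add_le : ∀ a b c : A, m.le (mul a (m.add b c)) (m.add (mul a b) (mul a c)))
    (ominus_mul_le : ∀ a b c : A,
      m.le (m.ominus (mul a b) (mul a c)) (mul a (m.ominus b c)))
    (mul_le_inf : ∀ a b : A, m.le (mul a b) (m.inf a b))
    (mul_ominus : ∀ a b c : A, mul a (m.ominus b c) = m.ominus (mul a b) (mul a c)) :
    ∀ a b c : A,
      mul a (m.inf b c) = m.inf (mul a b) (mul a c) ∧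
      mul a (m.sup b c) = m.sup (mul a b) (mul a c) := by
  intro a b c
  constructor
  · rw [MVHelper.inf_eq hmv b c, mul_ominus, mul_ominus,
      ← MVHelper.inf_eq hmv (mul a b) (mul a c)]
  · have h1 : m.le (mul a c) (mul a (m.sup b c)) := by
      rw [MVData.le, ← mul_ominus, MVHelper.le_sup_right hmv b c, mul_zero]
    calc mul a (m.sup b c) = m.sup (mul a (m.sup b c)) (mul a c) :=
          (MVHelper.sup_of_le hmv h1).symm
      _ = m.add (m.ominus (mul a (m.sup b c)) (mul a c)) (mul a c) := rfl
      _ = m.add (mul a (m.ominus (m.sup b c) c)) (mul a c) := by rw [mul_ominus]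
      _ = m.add (mul a (m.ominus b c)) (mul a c) := by
          rw [MVHelper.sup_ominus hmv b c]
      _ = m.sup (mul a b) (mul a c) := by rw [mul_ominus]; rfl
end

section
/- Let R be a commutative ring equipped with a lattice order such that addition is compatible with the order and products of nonnegative elements are nonnegative, and let u > 0 satisfy a·b ≤ a ⊓ b for all a, b ∈ [0, u]. Then the subring of R generated by the interval [0, u] equals {x ∈ R : ∃ n ∈ ℕ, |x| ≤ n•u}. In particular, if u is a strong unit of R, then R is generated as a ring by the segment [0, u]. -/
/-- Let `R` be a commutative ring with a lattice order compatible
with addition, in which products of nonnegative elements are nonnegative, and let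
`u > 0` satisfy `a·b ≤ a ⊓ b` for all `a, b ∈ [0, u]` (semi-lowness on the segment).
Then the (non-unital) subring of `R` generated by `[0, u]` equals
`{x : ∃ n, |x| ≤ n • u}` (with `|x| = x ⊔ -x`); in particular, if `u` is a strong
unit of `R`, then `R` is generated as a ring by the segment `[0, u]`. -/
theorem semilow_ring_generated_by_segment {R : Type*} [CommRing R] [Lattice R]
    [CovariantClass R R (· + ·) (· ≤ ·)]
    (mul_nonneg' : ∀ x y : R, 0 ≤ x → 0 ≤ y → 0 ≤ x * y)
    (u : R) (hu : 0 < u)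
    (semilow : ∀ a b : R, a ∈ Set.Icc (0 : R) u → b ∈ Set.Icc (0 : R) u →
      a * b ≤ a ⊓ b) :
    (NonUnitalSubring.closure (Set.Icc (0 : R) u) : Set R)
        = {x : R | ∃ n : ℕ, x ⊔ -x ≤ n • u} ∧
    ((∀ x : R, ∃ n : ℕ, x ⊔ -x ≤ n • u) →
      NonUnitalSubring.closure (Set.Icc (0 : R) u) = (⊤ : NonUnitalSubring R)) := by
  -- In a lattice-ordered group, `0 ≤ a + a → 0 ≤ a`.
  have two_cancel : ∀ a : R, 0 ≤ a + a → 0 ≤ a := by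
    intro a h
    have h1 : -a ≤ a := by
      have := add_le_add_right h (-a)
      simpa using this
    have hneg : a⁻ ≤ a⁺ := by
      rw [negPart_def, posPart_def]
      exact sup_le (le_trans h1 le_sup_left) le_sup_right
    have hzero : a⁻ = 0 := by
      have := posPart_inf_negPart_eq_zero a
      rwa [inf_eq_right.mpr hneg] at this
    have := posPart_sub_negPart a
    rw [hzero, sub_zero] at this
    rw [← this, posPart_def]
    exact le_sup_right
  -- `u * u ≤ u` and `0 ≤ u * u`.
  have huu : u * u ≤ u := by
    have := semilow u u ⟨hu.le, le_rfl⟩ ⟨hu.le, le_rfl⟩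
    simpa using this
  -- The candidate subring.
  set S : NonUnitalSubring R :=
    { carrier := {x : R | ∃ n : ℕ, x ⊔ -x ≤ n • u}
      zero_mem' := ⟨0, by simp⟩
      add_mem' := by
        rintro x y ⟨n, hn⟩ ⟨m, hm⟩
        refine ⟨n + m, ?_⟩
        have hx : x ≤ n • u := le_trans le_sup_left hn
        have hx' : -x ≤ n • u := le_trans le_sup_right hn
        have hy : y ≤ m • u := le_trans le_sup_left hm
        have hy' : -y ≤ m • u := le_trans le_sup_right hm
        rw [add_nsmul]
        refine sup_le (add_le_add hx hy) ?_
        rw [neg_add]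
        exact add_le_add hx' hy'
      neg_mem' := by
        rintro x ⟨n, hn⟩
        refine ⟨n, ?_⟩
        rw [neg_neg, sup_comm]
        exact hn
      mul_mem' := by
        rintro x y ⟨n, hn⟩ ⟨m, hm⟩
        refine ⟨n * m, ?_⟩
        have hx : x ≤ n • u := le_trans le_sup_left hn
        have hx' : -x ≤ n • u := le_trans le_sup_right hn
        have hy : y ≤ m • u := le_trans le_sup_left hm
        have hy' : -y ≤ m • u := le_trans le_sup_right hm
        set A := n • u with hA
        set B := m • u with hB
        have hAx : 0 ≤ A - x := sub_nonneg.mpr hx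
        have hAx' : 0 ≤ A + x := by
          have := add_le_add_left hx' x; simpa using this
        have hBy : 0 ≤ B - y := sub_nonneg.mpr hy
        have hBy' : 0 ≤ B + y := by
          have := add_le_add_left hy' y; simpa using this
        have key1 : x * y ≤ A * B := by
          have h1 := mul_nonneg' _ _ hAx hBy'
          have h2 := mul_nonneg' _ _ hAx' hBy
          have hsum : 0 ≤ (A * B - x * y) + (A * B - x * y) := by
            calc (0 : R) ≤ (A - x) * (B + y) + (A + x) * (B - y) := add_nonneg h1 h2
              _ = (A * B - x * y) + (A * B - x * y) := by ring
          exact sub_nonneg.mp (two_cancel _ hsum)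
        have key2 : -(x * y) ≤ A * B := by
          have h1 := mul_nonneg' _ _ hAx hBy
          have h2 := mul_nonneg' _ _ hAx' hBy'
          have hsum : 0 ≤ (A * B + x * y) + (A * B + x * y) := by
            calc (0 : R) ≤ (A - x) * (B - y) + (A + x) * (B + y) := add_nonneg h1 h2
              _ = (A * B + x * y) + (A * B + x * y) := by ring
          have h3 : (0:R) ≤ A * B - -(x * y) := by
            rw [sub_neg_eq_add]; exact two_cancel _ hsum
          exact sub_nonneg.mp h3
        have hAB : A * B = (n * m) • (u * u) := by
          rw [hA, hB, nsmul_eq_mul, nsmul_eq_mul, nsmul_eq_mul, Nat.cast_mul]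
          ring
        have hABle : A * B ≤ (n * m) • u := by
          rw [hAB]
          exact nsmul_le_nsmul_right huu (n * m)
        exact sup_le (le_trans key1 hABle) (le_trans key2 hABle) }
  -- Forward inclusion.
  have hfwd : NonUnitalSubring.closure (Set.Icc (0 : R) u) ≤ S := by
    refine NonUnitalSubring.closure_le.mpr ?_
    rintro x ⟨hx0, hxu⟩
    refine ⟨1, ?_⟩
    rw [one_nsmul]
    exact sup_le hxu (le_trans (neg_nonpos.mpr hx0) hu.le)
  -- Every `y` with `0 ≤ y ≤ n • u` lies in the closure.
  have hseg : ∀ n : ℕ, ∀ y : R, 0 ≤ y → y ≤ n • u →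
      y ∈ NonUnitalSubring.closure (Set.Icc (0 : R) u) := by
    intro n
    induction n with
    | zero =>
      intro y hy0 hyn
      rw [zero_nsmul] at hyn
      have : y = 0 := le_antisymm hyn hy0
      rw [this]
      exact zero_mem _
    | succ n ih =>
      intro y hy0 hyn
      have hz : y ⊓ u ∈ NonUnitalSubring.closure (Set.Icc (0 : R) u) :=
        NonUnitalSubring.subset_closure ⟨le_inf hy0 hu.le, inf_le_right⟩
      have hy1 : 0 ≤ y - y ⊓ u := sub_nonneg.mpr inf_le_left
      have hy2 : y - y ⊓ u ≤ n • u := by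
        rw [sub_inf]
        refine sup_le ?_ ?_
        · simpa using nsmul_nonneg hu.le n
        · rw [succ_nsmul] at hyn
          exact sub_le_iff_le_add.mpr hyn
      have hrest := ih _ hy1 hy2
      have : y = (y - y ⊓ u) + y ⊓ u := by ring
      rw [this]
      exact add_mem hrest hz
  have hmain : (NonUnitalSubring.closure (Set.Icc (0 : R) u) : Set R)
      = {x : R | ∃ n : ℕ, x ⊔ -x ≤ n • u} := by
    ext x
    constructor
    · intro hx
      exact hfwd hx
    · rintro ⟨n, hn⟩
      have hx : x ≤ n • u := le_trans le_sup_left hn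
      have hx' : -x ≤ n • u := le_trans le_sup_right hn
      have hnn : (0 : R) ≤ n • u := nsmul_nonneg hu.le n
      have hp : x⁺ ∈ NonUnitalSubring.closure (Set.Icc (0 : R) u) := by
        refine hseg n _ (posPart_nonneg x) ?_
        rw [posPart_def]
        exact sup_le hx hnn
      have hm : x⁻ ∈ NonUnitalSubring.closure (Set.Icc (0 : R) u) := by
        refine hseg n _ (negPart_nonneg x) ?_
        rw [negPart_def]
        exact sup_le hx' hnn
      have := sub_mem hp hm
      rwa [posPart_sub_negPart] at this
  refine ⟨hmain, ?_⟩
  intro h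
  apply (NonUnitalSubring.eq_top_iff' _).mpr
  intro x
  have : x ∈ (NonUnitalSubring.closure (Set.Icc (0 : R) u) : Set R) := by
    rw [hmain]; exact h x
  exact this
end

section
/- Let R be a commutative ring equipped with a lattice order such that addition is compatible with the order and products of nonnegative elements are nonnegative, let u > 0, and let A ⊆ [0, u] be a subset containing 0 and u, closed under the operations x ↦ u − x, (x, y) ↦ (x + y) ⊓ u, and under the ring product, and satisfying a·b ≤ a ⊓ b for all a, b ∈ A. Let A^♯ be the subring of R generated by A. Then: (i) u is a strong unit of A^♯, i.e. for every x ∈ A^♯ there is n ∈ ℕ with |x| ≤ n•u; (ii) a·b ≤ a ⊓ b for all a, b ∈ A^♯ ∩ [0, u]; and (iii) A^♯ ∩ [0, u] = A. -/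
open Function

section PMVAux

variable {R : Type*} [CommRing R] [Lattice R]
  [CovariantClass R R (· + ·) (· ≤ ·)]
  [CovariantClass R R (swap (· + ·)) (· ≤ ·)]

/-- transformed list -/
private def pmvTrL : List R → R → List R
  | [], _ => []
  | a :: l, c => ((a - c) ⊔ 0) :: pmvTrL l ((c - a) ⊔ 0)

/-- residual -/
private def pmvTrRes : List R → R → R
  | [], c => c
  | a :: l, c => pmvTrRes l ((c - a) ⊔ 0)

private theorem pmv_pair (a c : R) : (a - c) ⊔ 0 - ((c - a) ⊔ 0) = a - c := by
  have h : ((c - a) ⊔ 0) = -((a - c) ⊓ 0) := by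
    rw [neg_inf, neg_sub, neg_zero]
  rw [h, sub_neg_eq_add, add_comm, inf_add_sup, add_zero]

private theorem pmvTrL_sum (l : List R) (c : R) :
    (pmvTrL l c).sum - pmvTrRes l c = l.sum - c := by
  induction l generalizing c with
  | nil => simp [pmvTrL, pmvTrRes]
  | cons a l ih =>
      simp only [pmvTrL, pmvTrRes, List.sum_cons]
      have := ih ((c - a) ⊔ 0)
      have h2 : ((a - c) ⊔ 0) + (pmvTrL l ((c - a) ⊔ 0)).sum - pmvTrRes l ((c - a) ⊔ 0)
          = ((a - c) ⊔ 0) + (l.sum - ((c - a) ⊔ 0)) := by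
        rw [add_sub_assoc, this]
      rw [h2]
      have := pmv_pair a c
      linear_combination this

private theorem pmv_sum_nonneg {l : List R} (h : ∀ a ∈ l, (0:R) ≤ a) : 0 ≤ l.sum := by
  induction l with
  | nil => simp
  | cons a l ih =>
      simp only [List.sum_cons]
      exact add_nonneg (h a (by simp)) (ih fun b hb => h b (by simp [hb]))

private theorem pmvTrRes_eq (l : List R) (c : R) (hc : (0:R) ≤ c)
    (hl : ∀ a ∈ l, (0:R) ≤ a) : pmvTrRes l c = (c - l.sum) ⊔ 0 := by
  induction l generalizing c with
  | nil => simp [pmvTrRes, sup_eq_left.mpr hc]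
  | cons a l ih =>
      simp only [pmvTrRes, List.sum_cons]
      rw [ih ((c - a) ⊔ 0) le_sup_right (fun b hb => hl b (by simp [hb]))]
      have hs : (0:R) ≤ l.sum := pmv_sum_nonneg (fun b hb => hl b (by simp [hb]))
      rw [sup_sub, zero_sub, sup_assoc]
      have : (-l.sum) ⊔ (0:R) = 0 := sup_eq_right.mpr (neg_nonpos.mpr hs)
      rw [this]
      ring_nf

end PMVAux

section PMVMem

variable {R : Type*} [CommRing R] [Lattice R]
  [CovariantClass R R (· + ·) (· ≤ ·)]
  [CovariantClass R R (swap (· + ·)) (· ≤ ·)]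
  {u : R} {A : Set R}

private theorem pmv_trunc_mem (hneg : ∀ x ∈ A, u - x ∈ A)
    (hoplus : ∀ x ∈ A, ∀ y ∈ A, (x + y) ⊓ u ∈ A)
    {a c : R} (ha : a ∈ A) (hc : c ∈ A) : (a - c) ⊔ 0 ∈ A := by
  have key : (a - c) ⊔ 0 = u - ((u - a + c) ⊓ u) := by
    rw [sub_inf, sub_self]
    ring_nf
  rw [key]
  exact hneg _ (hoplus _ (hneg _ ha) _ hc)

private theorem pmvTrL_mem (hneg : ∀ x ∈ A, u - x ∈ A)
    (hoplus : ∀ x ∈ A, ∀ y ∈ A, (x + y) ⊓ u ∈ A) :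
    ∀ (l : List R) (c : R), c ∈ A → (∀ a ∈ l, a ∈ A) →
      ∀ b ∈ pmvTrL l c, b ∈ A := by
  intro l
  induction l with
  | nil => intro c _ _ b hb; simp [pmvTrL] at hb
  | cons a l ih =>
      intro c hc hl b hb
      simp only [pmvTrL, List.mem_cons] at hb
      rcases hb with rfl | hb
      · exact pmv_trunc_mem hneg hoplus (hl a (by simp)) hc
      · exact ih ((c - a) ⊔ 0)
          (pmv_trunc_mem hneg hoplus hc (hl a (by simp)))
          (fun x hx => hl x (by simp [hx])) b hb

private theorem pmv_pos_sum_mem (hA : A ⊆ Set.Icc (0:R) u) (h0 : (0:R) ∈ A)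
    (hoplus : ∀ x ∈ A, ∀ y ∈ A, (x + y) ⊓ u ∈ A) :
    ∀ l : List R, (∀ a ∈ l, a ∈ A) → l.sum ≤ u → l.sum ∈ A := by
  intro l
  induction l with
  | nil => intro _ _; simpa using h0
  | cons a l ih =>
      intro hl hle
      simp only [List.sum_cons] at hle ⊢
      have ha : a ∈ A := hl a (by simp)
      have hl' : ∀ b ∈ l, b ∈ A := fun b hb => hl b (by simp [hb])
      have hsle : l.sum ≤ u := by
        calc l.sum = 0 + l.sum := by ring
        _ ≤ a + l.sum := add_le_add_left (hA ha).1 _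
        _ ≤ u := hle
      have hs : l.sum ∈ A := ih hl' hsle
      have := hoplus a ha _ hs
      rwa [inf_eq_left.mpr hle] at this

/-- Key: an element of `[0,u]` represented as a difference of sums of elements of `A`
is itself in `A`. -/
private theorem pmv_key (hA : A ⊆ Set.Icc (0:R) u) (h0 : (0:R) ∈ A)
    (hneg : ∀ x ∈ A, u - x ∈ A)
    (hoplus : ∀ x ∈ A, ∀ y ∈ A, (x + y) ⊓ u ∈ A) :
    ∀ (l₂ l₁ : List R), (∀ a ∈ l₁, a ∈ A) → (∀ b ∈ l₂, b ∈ A) →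
      0 ≤ l₁.sum - l₂.sum → l₁.sum - l₂.sum ≤ u → l₁.sum - l₂.sum ∈ A := by
  intro l₂
  induction l₂ with
  | nil =>
      intro l₁ h₁ _ hge hle
      rw [List.sum_nil, sub_zero] at hge hle ⊢
      exact pmv_pos_sum_mem hA h0 hoplus l₁ h₁ hle
  | cons b t ih =>
      intro l₁ h₁ h₂ hge hle
      have hb : b ∈ A := h₂ b (by simp)
      have ht : ∀ x ∈ t, x ∈ A := fun x hx => h₂ x (by simp [hx])
      have htsum : (0:R) ≤ t.sum :=
        pmv_sum_nonneg (fun x hx => (hA (ht x hx)).1)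
      have hble : b ≤ l₁.sum := by
        have h1 : b + t.sum ≤ l₁.sum := by
          have h := hge
          simp only [List.sum_cons] at h
          exact sub_nonneg.mp h
        calc b = b + 0 := by ring
        _ ≤ b + t.sum := add_le_add_right htsum _
        _ ≤ l₁.sum := h1
      have hres : pmvTrRes l₁ b = 0 := by
        rw [pmvTrRes_eq l₁ b (hA hb).1 (fun x hx => (hA (h₁ x hx)).1)]
        exact sup_eq_right.mpr (sub_nonpos.mpr hble)
      have hsum' : (pmvTrL l₁ b).sum = l₁.sum - b := by
        have := pmvTrL_sum l₁ b
        rw [hres, sub_zero] at this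
        exact this
      have hrw : l₁.sum - (b :: t).sum = (pmvTrL l₁ b).sum - t.sum := by
        rw [hsum', List.sum_cons]; ring
      rw [hrw] at hge hle ⊢
      exact ih (pmvTrL l₁ b)
        (fun x hx => pmvTrL_mem hneg hoplus l₁ b hb h₁ x hx) ht hge hle

private theorem pmv_sum_le_nsmul {l : List R} (h : ∀ a ∈ l, a ≤ u) :
    l.sum ≤ l.length • u := by
  induction l with
  | nil => simp
  | cons a l ih =>
      simp only [List.sum_cons, List.length_cons, succ_nsmul]
      have h1 : a ≤ u := h a (by simp)
      have h2 : l.sum ≤ l.length • u := ih fun b hb => h b (by simp [hb])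
      calc a + l.sum ≤ u + l.sum := add_le_add_left h1 _
      _ ≤ u + l.length • u := add_le_add_right h2 _
      _ = l.length • u + u := by ring

private theorem pmv_nsmul_nonneg (hu : (0:R) ≤ u) (n : ℕ) : (0:R) ≤ n • u := by
  induction n with
  | zero => simp
  | succ n ih => rw [succ_nsmul]; exact add_nonneg ih hu

end PMVMem

/-- Let `R` be a commutative ring with a lattice order compatible
with addition, in which products of nonnegative elements are nonnegative, let
`u > 0`, and let `A ⊆ [0, u]` contain `0` and `u`, be closed under `x ↦ u - x`,
`(x, y) ↦ (x + y) ⊓ u` and the ring product, and satisfy `a·b ≤ a ⊓ b` on `A`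
(i.e. `A` is a `PMV_f`-algebra sitting inside `[0, u]`). Let `A^♯` be the
(non-unital) subring of `R` generated by `A`. Then: (i) `u` is a strong unit of
`A^♯`; (ii) `a·b ≤ a ⊓ b` for all `a, b ∈ A^♯ ∩ [0, u]` (so `A^♯` is a semi-low
`l_u`-ring); and (iii) `A^♯ ∩ [0, u] = A` (i.e. `A = Γ(A^♯, u)`). -/
theorem pmvf_generates_semilow_lu_ring {R : Type*} [CommRing R] [Lattice R]
    [CovariantClass R R (· + ·) (· ≤ ·)]
    (mul_nonneg' : ∀ x y : R, 0 ≤ x → 0 ≤ y → 0 ≤ x * y)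
    (u : R) (hu : 0 < u)
    (A : Set R) (hA : A ⊆ Set.Icc (0 : R) u)
    (h0 : (0 : R) ∈ A) (huA : u ∈ A)
    (hneg : ∀ x ∈ A, u - x ∈ A)
    (hoplus : ∀ x ∈ A, ∀ y ∈ A, (x + y) ⊓ u ∈ A)
    (hmul : ∀ x ∈ A, ∀ y ∈ A, x * y ∈ A)
    (hsl : ∀ x ∈ A, ∀ y ∈ A, x * y ≤ x ⊓ y) :
    (∀ x ∈ NonUnitalSubring.closure A, ∃ n : ℕ, x ⊔ -x ≤ n • u) ∧
    (∀ a b : R, a ∈ NonUnitalSubring.closure A → b ∈ NonUnitalSubring.closure A →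
      a ∈ Set.Icc (0 : R) u → b ∈ Set.Icc (0 : R) u → a * b ≤ a ⊓ b) ∧
    (NonUnitalSubring.closure A : Set R) ∩ Set.Icc (0 : R) u = A := by
  haveI : CovariantClass R R (Function.swap (· + ·)) (· ≤ ·) :=
    ⟨fun a b c h => by
      simp only [Function.swap]
      calc b + a ≤ c + a := by
            rw [add_comm b a, add_comm c a]; exact add_le_add_right h a
      ⟩
  -- The additive subgroup generated by A is closed under multiplication
  have hmulG : ∀ x y : R, x ∈ AddSubgroup.closure A → y ∈ AddSubgroup.closure A →
      x * y ∈ AddSubgroup.closure A := by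
    intro x y hx hy
    revert y
    refine AddSubgroup.closure_induction
      (fun a ha => ?_) ?_ (fun p q _ _ hp hq => ?_) (fun p _ hp => ?_) hx
    · -- a ∈ A; show ∀ y ∈ closure, a * y ∈ closure
      intro y hy
      refine AddSubgroup.closure_induction
        (fun b hb => AddSubgroup.subset_closure (hmul a ha b hb)) ?_
        (fun p q _ _ hp hq => ?_) (fun p _ hp => ?_) hy
      · rw [mul_zero]; exact zero_mem _
      · rw [mul_add]; exact add_mem hp hq
      · rw [mul_neg]; exact neg_mem hp
    · intro y _; rw [zero_mul]; exact zero_mem _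
    · intro y hy; rw [add_mul]; exact add_mem (hp y hy) (hq y hy)
    · intro y hy; rw [neg_mul]; exact neg_mem (hp y hy)
  -- closure as non-unital subring coincides with the additive closure
  have hGsub : ∀ x : R, x ∈ NonUnitalSubring.closure A ↔ x ∈ AddSubgroup.closure A := by
    let S : NonUnitalSubring R :=
      { carrier := AddSubgroup.closure A
        zero_mem' := zero_mem _
        add_mem' := fun h h' => add_mem h h'
        neg_mem' := fun h => neg_mem h
        mul_mem' := fun {a b} h h' => hmulG a b h h' }
    intro x
    constructor
    · intro hx
      have hle : NonUnitalSubring.closure A ≤ S :=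
        NonUnitalSubring.closure_le.mpr (fun a ha => AddSubgroup.subset_closure ha)
      exact hle hx
    · intro hx
      have hle : AddSubgroup.closure A ≤ (NonUnitalSubring.closure A).toAddSubgroup :=
        AddSubgroup.closure_le _ |>.mpr (fun a ha => NonUnitalSubring.subset_closure ha)
      exact hle hx
  -- representation as difference of sums of elements of A
  have hrep : ∀ x : R, x ∈ AddSubgroup.closure A →
      ∃ l₁ l₂ : List R, (∀ a ∈ l₁, a ∈ A) ∧ (∀ b ∈ l₂, b ∈ A) ∧
        x = l₁.sum - l₂.sum := by
    intro x hx
    refine AddSubgroup.closure_induction (fun a ha => ?_) ?_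
      (fun p q _ _ hp hq => ?_) (fun p _ hp => ?_) hx
    · exact ⟨[a], [], by simpa using ha, by simp, by simp⟩
    · exact ⟨[], [], by simp, by simp, by simp⟩
    · obtain ⟨p₁, p₂, hp₁, hp₂, hpe⟩ := hp
      obtain ⟨q₁, q₂, hq₁, hq₂, hqe⟩ := hq
      refine ⟨p₁ ++ q₁, p₂ ++ q₂, ?_, ?_, ?_⟩
      · intro a ha; rcases List.mem_append.mp ha with h | h
        exacts [hp₁ a h, hq₁ a h]
      · intro a ha; rcases List.mem_append.mp ha with h | h
        exacts [hp₂ a h, hq₂ a h]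
      · rw [List.sum_append, List.sum_append, hpe, hqe]; ring
    · obtain ⟨p₁, p₂, hp₁, hp₂, hpe⟩ := hp
      exact ⟨p₂, p₁, hp₂, hp₁, by rw [hpe]; ring⟩
  -- the membership criterion: closure ∩ [0,u] = A
  have hmem : ∀ x : R, x ∈ NonUnitalSubring.closure A → 0 ≤ x → x ≤ u → x ∈ A := by
    intro x hx hx0 hxu
    obtain ⟨l₁, l₂, h₁, h₂, he⟩ := hrep x ((hGsub x).mp hx)
    rw [he] at hx0 hxu ⊢
    exact pmv_key hA h0 hneg hoplus l₂ l₁ h₁ h₂ hx0 hxu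
  refine ⟨?_, ?_, ?_⟩
  · -- (i) strong unit
    intro x hx
    obtain ⟨l₁, l₂, h₁, h₂, he⟩ := hrep x ((hGsub x).mp hx)
    refine ⟨l₁.length + l₂.length, sup_le ?_ ?_⟩
    · have h1 : x ≤ l₁.sum := by
        rw [he]
        exact sub_le_self _ (pmv_sum_nonneg (fun a ha => (hA (h₂ a ha)).1))
      have h2 : l₁.sum ≤ l₁.length • u :=
        pmv_sum_le_nsmul (fun a ha => (hA (h₁ a ha)).2)
      have h3 : (l₁.length : ℕ) • u ≤ (l₁.length + l₂.length) • u := by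
        rw [add_nsmul]
        have := pmv_nsmul_nonneg (u := u) hu.le l₂.length
        calc l₁.length • u = l₁.length • u + 0 := by ring
        _ ≤ l₁.length • u + l₂.length • u := add_le_add_right this _
      exact h1.trans (h2.trans h3)
    · have h1 : -x ≤ l₂.sum := by
        rw [he, neg_sub]
        exact sub_le_self _ (pmv_sum_nonneg (fun a ha => (hA (h₁ a ha)).1))
      have h2 : l₂.sum ≤ l₂.length • u :=
        pmv_sum_le_nsmul (fun a ha => (hA (h₂ a ha)).2)
      have h3 : (l₂.length : ℕ) • u ≤ (l₁.length + l₂.length) • u := by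
        rw [add_nsmul]
        have := pmv_nsmul_nonneg (u := u) hu.le l₁.length
        calc l₂.length • u = 0 + l₂.length • u := by ring
        _ ≤ l₁.length • u + l₂.length • u := add_le_add_left this _
      exact h1.trans (h2.trans h3)
  · -- (ii) semi-low
    intro a b haC hbC ha hb
    exact hsl a (hmem a haC ha.1 ha.2) b (hmem b hbC hb.1 hb.2)
  · -- (iii) Γ(A♯, u) = A
    ext x
    constructor
    · rintro ⟨hx, hx0, hxu⟩
      exact hmem x hx hx0 hxu
    · intro hx
      exact ⟨NonUnitalSubring.subset_closure hx, hA hx⟩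
end

section
/- Let (R, u) be a semi-low l_u-ring and let J be an ideal of the MV-algebra Γ(R, u). Then the additive subgroup J^♯ of R generated by J (equivalently, the set of all finite sums Σ ε_i c_i with c_i ∈ J and ε_i ∈ {−1, 1}) equals {x ∈ R : |x| ⊓ u ∈ J}. -/
/-- Let `(R, u)` be a semi-low `l_u`-ring and let `J` be an ideal of
the MV-algebra `Γ(R, u) = [0, u]` (so `0 ∈ J`, `J` is downward closed in `[0, u]`,
and `J` is closed under the truncated sum `(a + b) ⊓ u`). Then the additive subgroup
`J^♯` of `R` generated by `J` equals `{x ∈ R : |x| ⊓ u ∈ J}` (with `|x| = x ⊔ -x`). -/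
theorem mv_ideal_generates_l_ideal {R : Type*} [CommRing R] [Lattice R]
    [CovariantClass R R (· + ·) (· ≤ ·)]
    (mul_nonneg' : ∀ x y : R, 0 ≤ x → 0 ≤ y → 0 ≤ x * y)
    (u : R) (hu : 0 < u)
    (strong : ∀ x : R, ∃ n : ℕ, x ⊔ -x ≤ n • u)
    (semilow : ∀ a b : R, a ∈ Set.Icc (0 : R) u → b ∈ Set.Icc (0 : R) u →
      a * b ≤ a ⊓ b)
    (J : Set R) (hJ : J ⊆ Set.Icc (0 : R) u) (h0 : (0 : R) ∈ J)
    (hdown : ∀ a ∈ Set.Icc (0 : R) u, ∀ b ∈ J, a ≤ b → a ∈ J)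
    (hadd : ∀ a ∈ J, ∀ b ∈ J, (a + b) ⊓ u ∈ J) :
    (AddSubgroup.closure J : Set R) = {x : R | (x ⊔ -x) ⊓ u ∈ J} := by
  haveI : CovariantClass R R (Function.swap (· + ·)) (· ≤ ·) :=
    ⟨fun a b c h => by simpa [add_comm] using add_le_add_left h a⟩
  have habs : ∀ z : R, z ⊔ -z = |z| := fun z => rfl
  have habsnn : ∀ z : R, (0 : R) ≤ z ⊔ -z := fun z => by rw [habs]; exact abs_nonneg z
  -- key subadditivity of truncation
  have key : ∀ a b : R, 0 ≤ a → 0 ≤ b → (a + b) ⊓ u ≤ a ⊓ u + b ⊓ u := by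
    intro a b ha hb
    rw [add_inf, inf_add, inf_add]
    refine le_inf (le_inf inf_le_left ?_) (le_inf ?_ ?_)
    · exact inf_le_right.trans (le_add_of_nonneg_right hb)
    · exact inf_le_right.trans (le_add_of_nonneg_left ha)
    · exact inf_le_right.trans (le_add_of_nonneg_left hu.le)
  have hmemIcc : ∀ z : R, 0 ≤ z → z ⊓ u ∈ Set.Icc (0 : R) u := fun z hz =>
    ⟨le_inf hz hu.le, inf_le_right⟩
  apply le_antisymm
  · -- closure J ⊆ RHS : RHS is an additive subgroup containing J
    have : J ⊆ {x : R | (x ⊔ -x) ⊓ u ∈ J} := by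
      intro c hc
      obtain ⟨hc0, hcu⟩ := hJ hc
      have h1 : c ⊔ -c = c := sup_eq_left.mpr ((neg_nonpos.mpr hc0).trans hc0)
      have h2 : c ⊓ u = c := inf_eq_left.mpr hcu
      simpa [h1, h2] using hc
    refine (AddSubgroup.closure_le
      { carrier := {x : R | (x ⊔ -x) ⊓ u ∈ J}
        zero_mem' := by
          simpa [inf_eq_left.mpr hu.le] using h0
        add_mem' := by
          intro x y hx hy
          have hsub : (x + y) ⊔ -(x + y) ≤ (x ⊔ -x) + (y ⊔ -y) := by
            refine sup_le (add_le_add le_sup_left le_sup_left) ?_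
            rw [neg_add]
            exact add_le_add le_sup_right le_sup_right
          have hle : ((x + y) ⊔ -(x + y)) ⊓ u ≤
              (((x ⊔ -x) ⊓ u) + ((y ⊔ -y) ⊓ u)) ⊓ u := by
            refine le_inf ?_ inf_le_right
            calc ((x + y) ⊔ -(x + y)) ⊓ u ≤ ((x ⊔ -x) + (y ⊔ -y)) ⊓ u :=
                  inf_le_inf_right u hsub
              _ ≤ _ := key _ _ (habsnn x) (habsnn y)
          exact hdown _ (hmemIcc _ (habsnn (x + y))) _ (hadd _ hx _ hy) hle
        neg_mem' := by
          intro x hx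
          simpa [sup_comm] using hx }).mpr this
  · -- RHS ⊆ closure J
    -- first: nonnegative elements with truncation in J
    have main : ∀ n : ℕ, ∀ y : R, 0 ≤ y → y ≤ n • u → y ⊓ u ∈ J →
        y ∈ AddSubgroup.closure J := by
      intro n
      induction n with
      | zero =>
        intro y hy0 hyn _
        simp only [zero_smul] at hyn
        have : y = 0 := le_antisymm hyn hy0
        rw [this]; exact zero_mem _
      | succ n ih =>
        intro y hy0 hyn hyJ
        set y' : R := (y - u) ⊔ 0 with hy'def
        have hsum : y ⊓ u + y' = y := by
          have h1 : y' = (y ⊔ u) - u := by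
            rw [hy'def, sup_sub, sub_self]
          rw [h1, ← add_sub_assoc, inf_add_sup, add_sub_cancel_right]
        have hy'0 : (0 : R) ≤ y' := le_sup_right
        have hy'le : y' ≤ y := sup_le (sub_le_self y hu.le) hy0
        have hy'n : y' ≤ n • u := by
          have h1 : y' = (y ⊔ u) - u := by
            rw [hy'def, sup_sub, sub_self]
          have h2 : y ⊔ u ≤ (n + 1) • u := by
            refine sup_le hyn ?_
            rw [succ_nsmul]
            exact le_add_of_nonneg_left (nsmul_nonneg hu.le n)
          rw [h1, sub_le_iff_le_add, succ_nsmul] at *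
          exact h2
        have hy'J : y' ⊓ u ∈ J :=
          hdown _ (hmemIcc _ hy'0) _ hyJ (inf_le_inf_right u hy'le)
        have h1 : y ⊓ u ∈ AddSubgroup.closure J := AddSubgroup.subset_closure hyJ
        have h2 : y' ∈ AddSubgroup.closure J := ih y' hy'0 hy'n hy'J
        have := AddSubgroup.add_mem _ h1 h2
        rwa [hsum] at this
    intro x hx
    simp only [Set.mem_setOf_eq] at hx
    obtain ⟨n, hn⟩ := strong x
    set xp : R := x ⊔ 0 with hxp
    set xm : R := -x ⊔ 0 with hxm
    have hdiff : xp - xm = x := by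
      have h1 : xm = (0 ⊔ x) - x := by
        rw [hxm, sup_sub, sub_self, zero_sub]
      rw [hxp, h1, sup_comm x 0, sub_sub_cancel]
    have hple : xp ≤ x ⊔ -x := sup_le le_sup_left (habsnn x)
    have hmle : xm ≤ x ⊔ -x := sup_le le_sup_right (habsnn x)
    have hpJ : xp ⊓ u ∈ J :=
      hdown _ (hmemIcc _ le_sup_right) _ hx (inf_le_inf_right u hple)
    have hmJ : xm ⊓ u ∈ J :=
      hdown _ (hmemIcc _ le_sup_right) _ hx (inf_le_inf_right u hmle)
    have hp : xp ∈ AddSubgroup.closure J :=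
      main n xp le_sup_right (hple.trans hn) hpJ
    have hm : xm ∈ AddSubgroup.closure J :=
      main n xm le_sup_right (hmle.trans hn) hmJ
    have := AddSubgroup.sub_mem _ hp hm
    rwa [hdiff] at this
end

section
/- Let (R, u) be a semi-low l_u-ring and let J be an ideal of the MV-algebra Γ(R, u). Then the additive subgroup J^♯ of R generated by J is an L-ideal of the l_u-ring R: it is order-convex (x ∈ J^♯ and |y| ≤ |x| imply y ∈ J^♯) and absorbent (r ∈ R and x ∈ J^♯ imply r·x ∈ J^♯). -/
/-- Let `(R, u)` be a semi-low `l_u`-ring and let `J` be an ideal of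
the MV-algebra `Γ(R, u) = [0, u]`. Then the additive subgroup `J^♯` of `R` generated
by `J` is an `L`-ideal of the `l_u`-ring `R`: it is order-convex (`x ∈ J^♯` and
`|y| ≤ |x|` imply `y ∈ J^♯`) and absorbent (`r ∈ R` and `x ∈ J^♯` imply
`r·x ∈ J^♯`), where `|x| = x ⊔ -x`. -/
theorem mv_ideal_generates_L_ideal {R : Type*} [CommRing R] [Lattice R]
    [CovariantClass R R (· + ·) (· ≤ ·)]
    (mul_nonneg' : ∀ x y : R, 0 ≤ x → 0 ≤ y → 0 ≤ x * y)
    (u : R) (hu : 0 < u)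
    (strong : ∀ x : R, ∃ n : ℕ, x ⊔ -x ≤ n • u)
    (semilow : ∀ a b : R, a ∈ Set.Icc (0 : R) u → b ∈ Set.Icc (0 : R) u →
      a * b ≤ a ⊓ b)
    (J : Set R) (hJ : J ⊆ Set.Icc (0 : R) u) (h0 : (0 : R) ∈ J)
    (hdown : ∀ a ∈ Set.Icc (0 : R) u, ∀ b ∈ J, a ≤ b → a ∈ J)
    (hadd : ∀ a ∈ J, ∀ b ∈ J, (a + b) ⊓ u ∈ J) :
    (∀ x ∈ AddSubgroup.closure J, ∀ y : R, y ⊔ -y ≤ x ⊔ -x →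
      y ∈ AddSubgroup.closure J) ∧
    (∀ r : R, ∀ x ∈ AddSubgroup.closure J, r * x ∈ AddSubgroup.closure J) := by
  classical
  set C := AddSubgroup.closure J with hC
  have hJnn : ∀ a ∈ J, (0:R) ≤ a := fun a ha => (hJ ha).1
  have hJle : ∀ a ∈ J, a ≤ u := fun a ha => (hJ ha).2
  -- sums of lists of elements of J are nonnegative
  have hsum_nonneg : ∀ l : List R, (∀ a ∈ l, a ∈ J) → (0:R) ≤ l.sum := by
    intro l hl
    induction l with
    | nil => simp
    | cons a t ih =>
      have h1 : (0:R) ≤ a := hJnn a (hl a (by simp))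
      have h2 : (0:R) ≤ t.sum := ih fun b hb => hl b (by simp [hb])
      simpa using add_le_add h1 h2
  -- semi-low gives u * (sum of J-elements) ≤ sum
  have husum : ∀ l : List R, (∀ a ∈ l, a ∈ J) → u * l.sum ≤ l.sum := by
    intro l hl
    induction l with
    | nil => simp
    | cons a t ih =>
      have haJ : a ∈ J := hl a (by simp)
      have h1 : u * a ≤ a :=
        le_trans (semilow u a ⟨hu.le, le_rfl⟩ ⟨hJnn a haJ, hJle a haJ⟩) inf_le_right
      have h2 : u * t.sum ≤ t.sum := ih (fun b hb => hl b (by simp [hb]))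
      simp only [List.sum_cons, mul_add]
      exact add_le_add h1 h2
  -- nonnegativity of n • u
  have hnu : ∀ n : ℕ, (0:R) ≤ n • u := by
    intro n
    induction n with
    | zero => simp
    | succ n ih =>
      rw [succ_nsmul]
      simpa using add_le_add ih hu.le
  -- monotonicity of n • ·
  have nsmul_mono : ∀ (n : ℕ) (a b : R), a ≤ b → n • a ≤ n • b := by
    intro n a b h
    induction n with
    | zero => simp
    | succ n ih => rw [succ_nsmul, succ_nsmul]; exact add_le_add ih h
  -- Riesz-type lemma: elements of [0,u] below a sum of members of J lie in J
  have riesz : ∀ l : List R, (∀ a ∈ l, a ∈ J) →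
      ∀ c : R, 0 ≤ c → c ≤ u → c ≤ l.sum → c ∈ J := by
    intro l
    induction l with
    | nil =>
      intro _ c hc0 _ hcs
      simp only [List.sum_nil] at hcs
      have : c = 0 := le_antisymm hcs hc0
      rwa [this]
    | cons a t ih =>
      intro hl c hc0 hcu hcs
      simp only [List.sum_cons] at hcs
      have haJ : a ∈ J := hl a (by simp)
      have htJ : ∀ b ∈ t, b ∈ J := fun b hb => hl b (by simp [hb])
      have hc1J : c ⊓ a ∈ J :=
        hdown (c ⊓ a) ⟨le_inf hc0 (hJnn a haJ), le_trans inf_le_left hcu⟩ a haJ inf_le_right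
      have hc2eq : c - c ⊓ a = (c - a) ⊔ (c - c) := by
        rw [inf_comm c a, sub_inf]
      have hc2nn : (0:R) ≤ c - c ⊓ a := by
        rw [hc2eq, sub_self]; exact le_sup_right
      have hc2c : c - c ⊓ a ≤ c :=
        sub_le_self c (le_inf hc0 (hJnn a haJ))
      have hc2s : c - c ⊓ a ≤ t.sum := by
        rw [hc2eq, sub_self]
        refine sup_le ?_ (hsum_nonneg t htJ)
        rw [sub_le_iff_le_add, add_comm]
        exact hcs
      have hc2J : c - c ⊓ a ∈ J := ih htJ _ hc2nn (hc2c.trans hcu) hc2s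
      have h := hadd (c ⊓ a) hc1J (c - c ⊓ a) hc2J
      have hsum : c ⊓ a + (c - c ⊓ a) = c := by ring
      rwa [hsum, inf_eq_left.mpr hcu] at h
  -- core convexity lemma
  have core : ∀ n : ℕ, ∀ y : R, 0 ≤ y → y ≤ n • u →
      ∀ l : List R, (∀ a ∈ l, a ∈ J) → y ≤ l.sum → y ∈ C := by
    intro n
    induction n with
    | zero =>
      intro y hy0 hyn _ _ _
      simp only [zero_smul] at hyn
      have : y = 0 := le_antisymm hyn hy0
      rw [this]; exact zero_mem C
    | succ n ih =>
      intro y hy0 hyn l hl hys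
      have h1 : y ⊓ u ∈ J :=
        riesz l hl (y ⊓ u) (le_inf hy0 hu.le) inf_le_right (le_trans inf_le_left hys)
      have hy2nn : (0:R) ≤ y ⊔ u - u := by
        rw [sub_nonneg]; exact le_sup_right
      have hy2u : y ⊔ u - u ≤ n • u := by
        rw [sub_le_iff_le_add]
        refine sup_le ?_ ?_
        · calc y ≤ (n+1) • u := hyn
            _ = n • u + u := by rw [succ_nsmul]
        · exact le_add_of_nonneg_left (hnu n)
      have hy2y : y ⊔ u - u ≤ y := by
        rw [sub_le_iff_le_add]
        exact sup_le (le_add_of_nonneg_right hu.le) (le_add_of_nonneg_left hy0)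
      have hy2C : y ⊔ u - u ∈ C := ih _ hy2nn hy2u l hl (hy2y.trans hys)
      have hdecomp : y ⊓ u + (y ⊔ u - u) = y := by
        rw [← add_sub_assoc, inf_add_sup, add_sub_cancel_right]
      have := add_mem (AddSubgroup.subset_closure h1) hy2C
      rwa [hdecomp] at this
  -- membership criterion: bounded by a sum of J-elements in absolute value
  have memD : ∀ (y : R) (l : List R), (∀ a ∈ l, a ∈ J) → y ⊔ -y ≤ l.sum → y ∈ C := by
    intro y l hl hy
    obtain ⟨n, hn⟩ := strong y
    have hs0 : (0:R) ≤ l.sum := hsum_nonneg l hl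
    have hp : y ⊔ 0 ∈ C :=
      core n (y ⊔ 0) le_sup_right
        (sup_le (le_trans le_sup_left hn) (hnu n)) l hl
        (sup_le (le_trans le_sup_left hy) hs0)
    have hm : (-y) ⊔ 0 ∈ C :=
      core n ((-y) ⊔ 0) le_sup_right
        (sup_le (le_trans le_sup_right hn) (hnu n)) l hl
        (sup_le (le_trans le_sup_right hy) hs0)
    have hyeq : y = (y ⊔ 0) - ((-y) ⊔ 0) := by
      rw [sub_eq_add_neg, neg_sup, neg_neg, neg_zero, add_comm]
      have h2 : (y ⊓ 0) + (y ⊔ 0) = y := by simpa using inf_add_sup y 0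
      exact h2.symm
    rw [hyeq]; exact sub_mem hp hm
  -- every element of the closure is absolutely bounded by a sum of J-elements
  have bound : ∀ x ∈ C, ∃ l : List R, (∀ a ∈ l, a ∈ J) ∧ x ⊔ -x ≤ l.sum := by
    intro x hx
    refine AddSubgroup.closure_induction (fun a ha => ?_) ?_
      (fun a b _ _ iha ihb => ?_) (fun a _ iha => ?_) hx
    · refine ⟨[a], fun b hb => ?_, ?_⟩
      · simp only [List.mem_singleton] at hb; rwa [hb]
      · have h0a : (0:R) ≤ a := hJnn a ha
        have : -a ≤ a := le_trans (neg_nonpos.mpr h0a) h0a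
        simpa using sup_le le_rfl this
    · exact ⟨[], by simp, by simp⟩
    · obtain ⟨l1, hl1, hb1⟩ := iha
      obtain ⟨l2, hl2, hb2⟩ := ihb
      refine ⟨l1 ++ l2, ?_, ?_⟩
      · intro c hc
        rcases List.mem_append.mp hc with h | h
        · exact hl1 c h
        · exact hl2 c h
      · rw [List.sum_append]
        refine sup_le ?_ ?_
        · exact add_le_add (le_trans le_sup_left hb1) (le_trans le_sup_left hb2)
        · rw [neg_add]
          exact add_le_add (le_trans le_sup_right hb1) (le_trans le_sup_right hb2)
    · obtain ⟨l, hl, hb⟩ := iha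
      exact ⟨l, hl, by rwa [neg_neg, sup_comm]⟩
  -- product monotonicity for nonnegative factors
  have mulmono : ∀ a a' b b' : R, 0 ≤ a → a ≤ a' → 0 ≤ b → b ≤ b' → a * b ≤ a' * b' := by
    intro a a' b b' ha haa hb hbb
    have h1 : a * b ≤ a' * b := by
      rw [← sub_nonneg, ← sub_mul]
      exact mul_nonneg' _ _ (sub_nonneg.2 haa) hb
    have h2 : a' * b ≤ a' * b' := by
      rw [← sub_nonneg, ← mul_sub]
      exact mul_nonneg' _ _ (ha.trans haa) (sub_nonneg.2 hbb)
    exact h1.trans h2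
  -- replicated lists
  have repl : ∀ (k : ℕ) (l : List R), (∀ a ∈ l, a ∈ J) →
      ∃ L : List R, (∀ a ∈ L, a ∈ J) ∧ L.sum = k • l.sum := by
    intro k l hl
    induction k with
    | zero => exact ⟨[], by simp, by simp⟩
    | succ k ih =>
      obtain ⟨L, hL, hLs⟩ := ih
      refine ⟨l ++ L, ?_, ?_⟩
      · intro c hc
        rcases List.mem_append.mp hc with h | h
        · exact hl c h
        · exact hL c h
      · rw [List.sum_append, hLs, succ_nsmul, add_comm]
  constructor
  · -- order-convexity
    intro x hx y hy
    obtain ⟨l, hl, hb⟩ := bound x hx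
    exact memD y l hl (hy.trans hb)
  · -- absorption
    intro r x hx
    obtain ⟨l, hl, hb⟩ := bound x hx
    obtain ⟨m, hm⟩ := strong r
    set s := l.sum with hs
    have hs0 : (0:R) ≤ s := hsum_nonneg l hl
    have hM0 : (0:R) ≤ m • u := hnu m
    -- positive/negative parts of r and x
    have hrp : r ⊔ 0 ≤ m • u := sup_le (le_trans le_sup_left hm) hM0
    have hrm : (-r) ⊔ 0 ≤ m • u := sup_le (le_trans le_sup_right hm) hM0
    have hxp : x ⊔ 0 ≤ s := sup_le (le_trans le_sup_left hb) hs0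
    have hxm : (-x) ⊔ 0 ≤ s := sup_le (le_trans le_sup_right hb) hs0
    have hrp0 : (0:R) ≤ r ⊔ 0 := le_sup_right
    have hrm0 : (0:R) ≤ (-r) ⊔ 0 := le_sup_right
    have hxp0 : (0:R) ≤ x ⊔ 0 := le_sup_right
    have hxm0 : (0:R) ≤ (-x) ⊔ 0 := le_sup_right
    have hrdec : r = (r ⊔ 0) - ((-r) ⊔ 0) := by
      rw [sub_eq_add_neg, neg_sup, neg_neg, neg_zero, add_comm]
      have h2 : (r ⊓ 0) + (r ⊔ 0) = r := by simpa using inf_add_sup r 0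
      exact h2.symm
    have hxdec : x = (x ⊔ 0) - ((-x) ⊔ 0) := by
      rw [sub_eq_add_neg, neg_sup, neg_neg, neg_zero, add_comm]
      have h2 : (x ⊓ 0) + (x ⊔ 0) = x := by simpa using inf_add_sup x 0
      exact h2.symm
    -- bound on |r*x|
    have hMs : ∀ a b : R, 0 ≤ a → a ≤ m • u → 0 ≤ b → b ≤ s → a * b ≤ (m • u) * s :=
      fun a b ha haM hb hbs => mulmono a (m • u) b s ha haM hb hbs
    have key : ∀ a b c d : R, 0 ≤ a → a ≤ m • u → 0 ≤ b → b ≤ m • u →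
        0 ≤ c → c ≤ s → 0 ≤ d → d ≤ s →
        (a - b) * (c - d) ≤ (m • u) * s + (m • u) * s := by
      intro a b c d ha haM hb hbM hc hcs hd hds
      have hexp : (a - b) * (c - d) = (a * c + b * d) - (a * d + b * c) := by ring
      have h1 : (a - b) * (c - d) ≤ a * c + b * d := by
        rw [hexp]
        exact sub_le_self _
          (by simpa using add_le_add (mul_nonneg' a d ha hd) (mul_nonneg' b c hb hc))
      exact h1.trans (add_le_add (hMs a c ha haM hc hcs) (hMs b d hb hbM hd hds))
    have habs : r * x ⊔ -(r * x) ≤ (m • u) * s + (m • u) * s := by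
      refine sup_le ?_ ?_
      · calc r * x = ((r ⊔ 0) - ((-r) ⊔ 0)) * ((x ⊔ 0) - ((-x) ⊔ 0)) := by
              rw [← hrdec, ← hxdec]
          _ ≤ (m • u) * s + (m • u) * s :=
              key _ _ _ _ hrp0 hrp hrm0 hrm hxp0 hxp hxm0 hxm
      · have hneg : ((-r) ⊔ 0) - (r ⊔ 0) = -r := by linear_combination hrdec
        calc -(r * x) = (((-r) ⊔ 0) - (r ⊔ 0)) * ((x ⊔ 0) - ((-x) ⊔ 0)) := by
              rw [hneg, ← hxdec, neg_mul]
          _ ≤ (m • u) * s + (m • u) * s :=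
              key _ _ _ _ hrm0 hrm hrp0 hrp hxp0 hxp hxm0 hxm
    -- (m•u)*s ≤ m•s using the semi-low condition
    have hus : u * s ≤ s := husum l hl
    have hMss : (m • u) * s ≤ m • s := by
      have h1 : (m • u) * s = m • (u * s) := smul_mul_assoc m u s
      rw [h1]
      exact nsmul_mono m _ _ hus
    have htot : r * x ⊔ -(r * x) ≤ (2 * m) • s := by
      have h2 : (m • u) * s + (m • u) * s ≤ m • s + m • s := add_le_add hMss hMss
      have h3 : m • s + m • s = (2 * m) • s := by
        rw [two_mul, add_nsmul]
      exact habs.trans (h2.trans_eq h3)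
    obtain ⟨L, hL, hLs⟩ := repl (2 * m) l hl
    exact memD (r * x) L hL (by rw [hLs]; exact htot)
end

section
/- In a semi-low l_u-ring (R, u), every l-ideal is an L-ideal: if J is an additive subgroup of R such that x ∈ J and |y| ≤ |x| imply y ∈ J, then J is closed under multiplication by arbitrary elements of R, i.e. r ∈ R and x ∈ J imply r·x ∈ J. -/
/-- In a semi-low `l_u`-ring `(R, u)`, every `l`-ideal is an
`L`-ideal: if `J` is an additive subgroup of `R` such that `x ∈ J` and `|y| ≤ |x|`
imply `y ∈ J` (with `|x| = x ⊔ -x`), then `J` absorbs multiplication by arbitrary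
elements of `R`. -/
theorem l_ideal_is_L_ideal {R : Type*} [CommRing R] [Lattice R]
    [CovariantClass R R (· + ·) (· ≤ ·)]
    (mul_nonneg' : ∀ x y : R, 0 ≤ x → 0 ≤ y → 0 ≤ x * y)
    (u : R) (hu : 0 < u)
    (strong : ∀ x : R, ∃ n : ℕ, x ⊔ -x ≤ n • u)
    (semilow : ∀ a b : R, a ∈ Set.Icc (0 : R) u → b ∈ Set.Icc (0 : R) u →
      a * b ≤ a ⊓ b)
    (J : AddSubgroup R)
    (hconv : ∀ x ∈ J, ∀ y : R, y ⊔ -y ≤ x ⊔ -x → y ∈ J) :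
    ∀ r : R, ∀ x ∈ J, r * x ∈ J := by
  haveI : CovariantClass R R (Function.swap (· + ·)) (· ≤ ·) :=
    ⟨fun a b c h => by simpa [add_comm] using add_le_add_left h a⟩
  -- `u * y ≤ y` for all `0 ≤ y`
  have key : ∀ n : ℕ, ∀ y : R, 0 ≤ y → y ≤ n • u → u * y ≤ y := by
    intro n
    induction n with
    | zero =>
      intro y hy0 hyn
      simp only [zero_smul] at hyn
      have : y = 0 := le_antisymm hyn hy0
      simp [this]
    | succ n ih =>
      intro y hy0 hyn
      have h1 : y ⊓ u ∈ Set.Icc (0 : R) u := ⟨le_inf hy0 hu.le, inf_le_right⟩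
      have h2 : y - y ⊓ u = (y - y) ⊔ (y - u) := by
        rw [sub_inf]
      have h2' : y - y ⊓ u = 0 ⊔ (y - u) := by rw [h2, sub_self]
      have h3 : 0 ≤ y - y ⊓ u := h2' ▸ le_sup_left
      have h4 : y - y ⊓ u ≤ n • u := by
        rw [h2']
        refine sup_le (nsmul_nonneg hu.le n) ?_
        rw [sub_le_iff_le_add]
        rw [succ_nsmul] at hyn
        exact hyn
      have h5 : u * (y - y ⊓ u) ≤ y - y ⊓ u := ih _ h3 h4
      have h6 : u * (y ⊓ u) ≤ y ⊓ u :=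
        le_trans (semilow u (y ⊓ u) ⟨hu.le, le_rfl⟩ h1) inf_le_right
      calc u * y = u * (y ⊓ u) + u * (y - y ⊓ u) := by ring
        _ ≤ (y ⊓ u) + (y - y ⊓ u) := add_le_add h6 h5
        _ = y := by ring
  -- |a*b| ≤ |a| * |b|
  have habs : ∀ a b : R, (a * b) ⊔ -(a * b) ≤ (a ⊔ -a) * (b ⊔ -b) := by
    intro a b
    have ea : a⁺ - a⁻ = a := posPart_sub_negPart a
    have eb : b⁺ - b⁻ = b := posPart_sub_negPart b
    have ea' : a⁺ + a⁻ = a ⊔ -a := posPart_add_negPart a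
    have eb' : b⁺ + b⁻ = b ⊔ -b := posPart_add_negPart b
    have p1 : (0:R) ≤ a⁺ * b⁺ := mul_nonneg' _ _ (posPart_nonneg a) (posPart_nonneg b)
    have p2 : (0:R) ≤ a⁺ * b⁻ := mul_nonneg' _ _ (posPart_nonneg a) (negPart_nonneg b)
    have p3 : (0:R) ≤ a⁻ * b⁺ := mul_nonneg' _ _ (negPart_nonneg a) (posPart_nonneg b)
    have p4 : (0:R) ≤ a⁻ * b⁻ := mul_nonneg' _ _ (negPart_nonneg a) (negPart_nonneg b)
    refine sup_le ?_ ?_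
    · have : (a⁺ + a⁻) * (b⁺ + b⁻) - (a⁺ - a⁻) * (b⁺ - b⁻)
          = (a⁺ * b⁻ + a⁺ * b⁻) + (a⁻ * b⁺ + a⁻ * b⁺) := by ring
      have hnn : 0 ≤ (a⁺ + a⁻) * (b⁺ + b⁻) - (a⁺ - a⁻) * (b⁺ - b⁻) := by
        rw [this]; exact add_nonneg (add_nonneg p2 p2) (add_nonneg p3 p3)
      have := sub_nonneg.mp hnn
      rw [ea, eb, ea', eb'] at this
      exact this
    · have : (a⁺ + a⁻) * (b⁺ + b⁻) - (-((a⁺ - a⁻) * (b⁺ - b⁻)))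
          = (a⁺ * b⁺ + a⁺ * b⁺) + (a⁻ * b⁻ + a⁻ * b⁻) := by ring
      have hnn : 0 ≤ (a⁺ + a⁻) * (b⁺ + b⁻) - (-((a⁺ - a⁻) * (b⁺ - b⁻))) := by
        rw [this]; exact add_nonneg (add_nonneg p1 p1) (add_nonneg p4 p4)
      have := sub_nonneg.mp hnn
      rw [ea, eb, ea', eb'] at this
      exact this
  intro r x hx
  obtain ⟨n, hn⟩ := strong r
  obtain ⟨m, hm⟩ := strong x
  have hxa : (0:R) ≤ x ⊔ -x := abs_nonneg x
  have hux : (0:R) ≤ u * (x ⊔ -x) := mul_nonneg' _ _ hu.le hxa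
  have huxle : u * (x ⊔ -x) ≤ x ⊔ -x := key m _ hxa hm
  have hmemux : u * (x ⊔ -x) ∈ J :=
    hconv x hx _ (sup_le huxle ((neg_nonpos.mpr hux).trans hxa))
  have hmemz : n • (u * (x ⊔ -x)) ∈ J := AddSubgroup.nsmul_mem J hmemux n
  refine hconv _ hmemz (r * x) ?_
  refine le_trans ?_ le_sup_left
  refine le_trans (habs r x) ?_
  have h1 : (r ⊔ -r) * (x ⊔ -x) ≤ (n • u) * (x ⊔ -x) := by
    have h2 : (0:R) ≤ (n • u - (r ⊔ -r)) * (x ⊔ -x) :=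
      mul_nonneg' _ _ (sub_nonneg.mpr hn) hxa
    have h3 : (n • u - (r ⊔ -r)) * (x ⊔ -x)
        = (n • u) * (x ⊔ -x) - (r ⊔ -r) * (x ⊔ -x) := sub_mul _ _ _
    rw [h3] at h2
    exact sub_nonneg.mp h2
  refine h1.trans (le_of_eq ?_)
  exact smul_mul_assoc n u (x ⊔ -x)
end

section
/- Let (R, u) be a semi-low l_u-ring. Then for all x, y, z ∈ [0, u]: x·((y − z) ⊔ 0) = (x·y − x·z) ⊔ 0. Consequently, Γ(R, u) = [0, u] with the operations x ⊕ y = (x + y) ⊓ u, ¬x = u − x and the restricted ring product is a PMV_f-algebra (in the MV-algebra Γ(R, u) one has y ⊖ z = (y − z) ⊔ 0, so the identity asserts x·(y ⊖ z) = x·y ⊖ x·z, and x·y ≤ x ∧ y holds by semi-lowness). -/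
/-- Let `(R, u)` be a semi-low `l_u`-ring. Then for all
`x, y, z ∈ [0, u]` one has `x·((y - z) ⊔ 0) = (x·y - x·z) ⊔ 0`, i.e. in the
MV-algebra `Γ(R, u)` the product satisfies `x·(y ⊖ z) = x·y ⊖ x·z`; together with
the subdistributivity `x·((y + z) ⊓ u) ≤ (x·y + x·z) ⊓ u` (that is,
`x·(y ⊕ z) ≤ x·y ⊕ x·z`) and semi-lowness `x·y ≤ x ⊓ y`, this makes
`Γ(R, u)` a `PMV_f`-algebra. -/
theorem gamma_semilow_is_pmvf {R : Type*} [CommRing R] [Lattice R]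
    [CovariantClass R R (· + ·) (· ≤ ·)]
    (mul_nonneg' : ∀ x y : R, 0 ≤ x → 0 ≤ y → 0 ≤ x * y)
    (u : R) (hu : 0 < u)
    (strong : ∀ x : R, ∃ n : ℕ, x ⊔ -x ≤ n • u)
    (semilow : ∀ a b : R, a ∈ Set.Icc (0 : R) u → b ∈ Set.Icc (0 : R) u →
      a * b ≤ a ⊓ b) :
    ∀ x ∈ Set.Icc (0 : R) u, ∀ y ∈ Set.Icc (0 : R) u, ∀ z ∈ Set.Icc (0 : R) u,
      x * ((y - z) ⊔ 0) = (x * y - x * z) ⊔ 0 ∧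
      x * ((y + z) ⊓ u) ≤ (x * y + x * z) ⊓ u := by
  rintro x ⟨hx0, hxu⟩ y ⟨hy0, hyu⟩ z ⟨hz0, hzu⟩
  set p : R := (y - z) ⊔ 0 with hp
  set q : R := (z - y) ⊔ 0 with hq
  have hp0 : 0 ≤ p := le_sup_right
  have hq0 : 0 ≤ q := le_sup_right
  have hpu : p ≤ u := by
    refine sup_le ?_ hu.le
    calc y - z ≤ y - 0 := by exact sub_le_sub_left hz0 y
    _ = y := sub_zero y
    _ ≤ u := hyu
  have hqu : q ≤ u := by
    refine sup_le ?_ hu.le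
    calc z - y ≤ z - 0 := by exact sub_le_sub_left hy0 z
    _ = z := sub_zero z
    _ ≤ u := hzu
  have hpy : p ≤ y := by
    refine sup_le ?_ hy0
    calc y - z ≤ y - 0 := sub_le_sub_left hz0 y
    _ = y := sub_zero y
  have hqz : q ≤ z := by
    refine sup_le ?_ hz0
    calc z - y ≤ z - 0 := sub_le_sub_left hy0 z
    _ = z := sub_zero z
  have hinf : p ⊓ q = 0 := by
    have : q = (-(y - z)) ⊔ 0 := by rw [hq, neg_sub]
    rw [this, hp]
    exact posPart_inf_negPart_eq_zero (y - z)
  have hsub : p - q = y - z := by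
    have : q = (-(y - z)) ⊔ 0 := by rw [hq, neg_sub]
    rw [this, hp]
    exact posPart_sub_negPart (y - z)
  -- products
  have hxp0 : 0 ≤ x * p := mul_nonneg' _ _ hx0 hp0
  have hxq0 : 0 ≤ x * q := mul_nonneg' _ _ hx0 hq0
  have hxp_le : x * p ≤ p := le_trans (semilow x p ⟨hx0, hxu⟩ ⟨hp0, hpu⟩) inf_le_right
  have hxq_le : x * q ≤ q := le_trans (semilow x q ⟨hx0, hxu⟩ ⟨hq0, hqu⟩) inf_le_right
  have hinfx : (x * p) ⊓ (x * q) = 0 :=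
    le_antisymm (le_trans (inf_le_inf hxp_le hxq_le) hinf.le) (le_inf hxp0 hxq0)
  have hkey : x * p = (x * y - x * z) ⊔ 0 := by
    have hdiff : x * p - x * q = x * y - x * z := by
      rw [← mul_sub, hsub, mul_sub]
    rw [← hdiff]
    have hsup : (x * p) ⊔ (x * q) = x * p + x * q := by
      have := inf_add_sup (x * p) (x * q)
      rw [hinfx, zero_add] at this
      exact this
    have : (x * p - x * q) ⊔ 0 = (x * p) ⊔ (x * q) - x * q := by
      rw [sup_sub, sub_self]
    rw [this, hsup]
    ring
  refine ⟨hkey, ?_⟩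
  have h1 : x * ((y + z) ⊓ u) ≤ x * y + x * z := by
    have := mul_nonneg' x ((y + z) - ((y + z) ⊓ u)) hx0 (by simp)
    have h2 : x * ((y + z) ⊓ u) ≤ x * (y + z) := by
      rw [mul_sub] at this
      exact sub_nonneg.mp this
    rw [mul_add] at h2
    exact h2
  have hs0 : 0 ≤ (y + z) ⊓ u := le_inf (add_nonneg hy0 hz0) hu.le
  have h2 : x * ((y + z) ⊓ u) ≤ u :=
    le_trans (semilow x _ ⟨hx0, hxu⟩ ⟨hs0, inf_le_right⟩)
      (le_trans inf_le_right inf_le_right)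
  exact le_inf h1 h2
end

section
/- The inclusion of unitary PMV-algebras (PMV_1) in PMV_f-algebras is strict: for a real number u with 0 < u < 1 (e.g. u = 1/2), the interval A = [0, u] ⊆ ℝ with operations x ⊕ y = min(x + y, u), ¬x = u − x, and the usual real multiplication is a PMV_f-algebra (the MV axioms hold, x·y ≤ min(x, y), and x·max(y − z, 0) = max(x·y − x·z, 0) for all x, y, z ∈ A), but it has no multiplicative unit: there is no s ∈ A with s·x = x for all x ∈ A. -/
private lemma seg_lukax (u x y : ℝ) (hx : x ∈ Set.Icc (0:ℝ) u) (hy : y ∈ Set.Icc (0:ℝ) u) :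
    min ((u - min ((u - x) + y) u) + y) u = max x y := by
  obtain ⟨hx0, hxu⟩ := hx; obtain ⟨hy0, hyu⟩ := hy
  rcases le_total x y with h | h
  · rw [min_eq_right (α := ℝ) (by linarith : u ≤ u - x + y), max_eq_right h]
    rw [sub_self, zero_add, min_eq_left hyu]
  · rw [min_eq_left (α := ℝ) (by linarith : u - x + y ≤ u), max_eq_left h]
    have h2 : u - (u - x + y) + y = x := by ring
    rw [h2, min_eq_left hxu]

/-- The inclusion `PMV_1 ⊂ PMV_f` is strict: for a real `u` with
`0 < u < 1`, the segment `A = [0, u] ⊆ ℝ` with `x ⊕ y = min (x + y) u`,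
`¬x = u - x` and the usual real multiplication is a `PMV_f`-algebra (the MV axioms
hold, the product is well defined on `A`, `x·0 = 0`, `x·(y ⊕ z) ≤ x·y ⊕ x·z`,
`x·y ≤ min x y`, and `x·max (y - z) 0 = max (x·y - x·z) 0`), but it has no
multiplicative unit: there is no `s ∈ A` with `s·x = x` for all `x ∈ A`. -/
theorem segment_pmvf_not_unitary (u : ℝ) (hu0 : 0 < u) (hu1 : u < 1) :
    -- the product and the MV operations are well defined on `A = [0, u]`
    (∀ x ∈ Set.Icc (0 : ℝ) u, ∀ y ∈ Set.Icc (0 : ℝ) u,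
      x * y ∈ Set.Icc (0 : ℝ) u) ∧
    (∀ x ∈ Set.Icc (0 : ℝ) u, ∀ y ∈ Set.Icc (0 : ℝ) u,
      min (x + y) u ∈ Set.Icc (0 : ℝ) u) ∧
    (∀ x ∈ Set.Icc (0 : ℝ) u, u - x ∈ Set.Icc (0 : ℝ) u) ∧
    -- `(A, ⊕, 0)` is a commutative monoid
    (∀ x ∈ Set.Icc (0 : ℝ) u, ∀ y ∈ Set.Icc (0 : ℝ) u, ∀ z ∈ Set.Icc (0 : ℝ) u,
      min (min (x + y) u + z) u = min (x + min (y + z) u) u) ∧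
    (∀ x y : ℝ, min (x + y) u = min (y + x) u) ∧
    (∀ x ∈ Set.Icc (0 : ℝ) u, min (x + 0) u = x) ∧
    -- the MV axioms for the negation `¬x = u - x`
    (∀ x ∈ Set.Icc (0 : ℝ) u, u - (u - x) = x) ∧
    (∀ x ∈ Set.Icc (0 : ℝ) u, min (x + (u - 0)) u = u - 0) ∧
    (∀ x ∈ Set.Icc (0 : ℝ) u, ∀ y ∈ Set.Icc (0 : ℝ) u,
      min ((u - min ((u - x) + y) u) + y) u = min ((u - min ((u - y) + x) u) + x) u) ∧
    -- the `PMV_f` axioms for the usual real product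
    (∀ x ∈ Set.Icc (0 : ℝ) u, x * 0 = 0) ∧
    (∀ x ∈ Set.Icc (0 : ℝ) u, ∀ y ∈ Set.Icc (0 : ℝ) u, ∀ z ∈ Set.Icc (0 : ℝ) u,
      x * min (y + z) u ≤ min (x * y + x * z) u) ∧
    (∀ x ∈ Set.Icc (0 : ℝ) u, ∀ y ∈ Set.Icc (0 : ℝ) u, x * y ≤ min x y) ∧
    (∀ x ∈ Set.Icc (0 : ℝ) u, ∀ y ∈ Set.Icc (0 : ℝ) u, ∀ z ∈ Set.Icc (0 : ℝ) u,
      x * max (y - z) 0 = max (x * y - x * z) 0) ∧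
    -- but there is no multiplicative unit
    ¬ ∃ s ∈ Set.Icc (0 : ℝ) u, ∀ x ∈ Set.Icc (0 : ℝ) u, s * x = x := by
  refine ⟨?_, ?_, ?_, ?_, ?_, ?_, ?_, ?_, ?_, ?_, ?_, ?_, ?_, ?_⟩
  · rintro x ⟨hx0, hxu⟩ y ⟨hy0, hyu⟩
    exact ⟨mul_nonneg hx0 hy0, by nlinarith⟩
  · rintro x ⟨hx0, hxu⟩ y ⟨hy0, hyu⟩
    exact ⟨le_min (by linarith) hu0.le, min_le_right _ _⟩
  · rintro x ⟨hx0, hxu⟩; exact ⟨by linarith, by linarith⟩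
  · rintro x ⟨hx0, hxu⟩ y ⟨hy0, hyu⟩ z ⟨hz0, hzu⟩
    have h1 : min (min (x + y) u + z) u = min (x + y + z) u := by
      rcases le_total (x + y) u with h | h
      · rw [min_eq_left h]
      · rw [min_eq_right h, min_eq_right (by linarith), min_eq_right (by linarith)]
    have h2 : min (x + min (y + z) u) u = min (x + y + z) u := by
      rcases le_total (y + z) u with h | h
      · rw [min_eq_left h]; ring_nf
      · rw [min_eq_right h, min_eq_right (by linarith), min_eq_right (by linarith)]
    rw [h1, h2]
  · intro x y; rw [add_comm]
  · rintro x ⟨hx0, hxu⟩; rw [add_zero, min_eq_left hxu]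
  · rintro x ⟨hx0, hxu⟩; ring
  · rintro x ⟨hx0, hxu⟩; rw [sub_zero, min_eq_right (by linarith)]
  · rintro x hx y hy
    rw [seg_lukax u x y hx hy, seg_lukax u y x hy hx, max_comm]
  · rintro x _; exact mul_zero x
  · rintro x ⟨hx0, hxu⟩ y ⟨hy0, hyu⟩ z ⟨hz0, hzu⟩
    refine le_min ?_ ?_
    · calc x * min (y + z) u ≤ x * (y + z) := by
            exact mul_le_mul_of_nonneg_left (min_le_left _ _) hx0
        _ = x * y + x * z := by ring
    · calc x * min (y + z) u ≤ 1 * min (y + z) u := by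
            apply mul_le_mul_of_nonneg_right (by linarith) (le_min (by linarith) hu0.le)
        _ ≤ u := by rw [one_mul]; exact min_le_right _ _
  · rintro x ⟨hx0, hxu⟩ y ⟨hy0, hyu⟩
    exact le_min (by nlinarith) (by nlinarith)
  · rintro x ⟨hx0, hxu⟩ y ⟨hy0, hyu⟩ z ⟨hz0, hzu⟩
    rcases le_total (y - z) 0 with h | h
    · rw [max_eq_right h, mul_zero, max_eq_right (by nlinarith)]
    · rw [max_eq_left h, max_eq_left (by nlinarith)]; ring
  · rintro ⟨s, ⟨hs0, hsu⟩, hs⟩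
    have := hs u ⟨hu0.le, le_refl u⟩
    nlinarith
end
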